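/- Let D be a k×k complex diagonal matrix whose diagonal entries λ_1, …, λ_k are pairwise distinct, let d ≥ 1, and let D_d = I_d ⊗ D + N_d ⊗ I_k be the dk×dk block matrix with D in every diagonal block and I_k in every superdiagonal block. If Y ∈ ℂ^{dk×dk} commutes with D_d, then Y is block upper triangular Toeplitz with k×k blocks, i.e. there exist matrices Y_1, …, Y_d ∈ ℂ^{k×k} such that the (i,i') block of Y equals Y_{i'−i+1} when i ≤ i' and 0 when i > i'; moreover each Y_t is a diagonal matrix. -/
import Mathlib


open Polynomial Matrix Kronecker

noncomputable section

/-- The `d × d` nilpotent matrix with ones on the superdiagonal. -/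
def superdiag (d : ℕ) : Matrix (Fin d) (Fin d) ℂ :=
  fun i j => if (i : ℕ) + 1 = (j : ℕ) then 1 else 0

/-- The `d × d`-block upper triangular Toeplitz matrix with `k × k` blocks
`Xs 0, Xs 1, …, Xs (d-1)`: its `(i,i')` block is `Xs (i'-i)` for `i ≤ i'` and `0` otherwise. -/
def butt {k d : ℕ} (Xs : Fin d → Matrix (Fin k) (Fin k) ℂ) :
    Matrix (Fin d × Fin k) (Fin d × Fin k) ℂ :=
  fun p q => if _h : (p.1 : ℕ) ≤ (q.1 : ℕ)
    then Xs ⟨(q.1 : ℕ) - (p.1 : ℕ), lt_of_le_of_lt (Nat.sub_le _ _) q.1.isLt⟩ p.2 q.2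
    else 0

private lemma sum_pred_eq {d : ℕ} (j : Fin d) (f : Fin d → ℂ) :
    (∑ x : Fin d, if (x:ℕ)+1 = (j:ℕ) then f x else 0)
    = if _h : 0 < (j:ℕ) then f ⟨(j:ℕ)-1, lt_of_le_of_lt (Nat.sub_le _ _) j.isLt⟩ else 0 := by
  split_ifs with h
  · rw [Finset.sum_eq_single (⟨(j:ℕ)-1, lt_of_le_of_lt (Nat.sub_le _ _) j.isLt⟩ : Fin d)]
    · rw [if_pos (by simp; omega)]
    · intro x _ hx
      rw [if_neg]
      intro hc; apply hx; apply Fin.ext; simp; omega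
    · simp
  · apply Finset.sum_eq_zero; intro x _; rw [if_neg]; omega

private lemma sum_succ_eq {d : ℕ} (i : Fin d) (f : Fin d → ℂ) :
    (∑ x : Fin d, if (i:ℕ)+1 = (x:ℕ) then f x else 0)
    = if h : (i:ℕ)+1 < d then f ⟨(i:ℕ)+1, h⟩ else 0 := by
  split_ifs with h
  · rw [Finset.sum_eq_single (⟨(i:ℕ)+1, h⟩ : Fin d)]
    · rw [if_pos (by simp)]
    · intro x _ hx
      rw [if_neg]
      intro hc; apply hx; apply Fin.ext; simp; omega
    · simp
  · apply Finset.sum_eq_zero; intro x _; rw [if_neg]; omega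

/-- Let `D` be a `k×k` complex diagonal matrix with pairwise distinct
diagonal entries, `d ≥ 1`, and `D_d = I_d ⊗ D + N_d ⊗ I_k`. Every `Y` commuting with
`D_d` is block upper triangular Toeplitz with `k×k` blocks `Y_1, …, Y_d`, each of which
is a diagonal matrix. -/
theorem stmt_9 (k d : ℕ) (hd : 1 ≤ d)
    (D : Matrix (Fin k) (Fin k) ℂ) (hdiag : D.IsDiag)
    (hdist : ∀ i j : Fin k, i ≠ j → D i i ≠ D j j)
    (Y : Matrix (Fin d × Fin k) (Fin d × Fin k) ℂ)
    (hcomm : Y * ((1 : Matrix (Fin d) (Fin d) ℂ) ⊗ₖ D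
          + superdiag d ⊗ₖ (1 : Matrix (Fin k) (Fin k) ℂ))
        = ((1 : Matrix (Fin d) (Fin d) ℂ) ⊗ₖ D
          + superdiag d ⊗ₖ (1 : Matrix (Fin k) (Fin k) ℂ)) * Y) :
    ∃ Ys : Fin d → Matrix (Fin k) (Fin k) ℂ,
      (∀ t, (Ys t).IsDiag) ∧ Y = butt Ys := by
  classical
  -- entrywise commutation relation
  have key : ∀ (i j : Fin d) (a b : Fin k),
      Y (i,a) (j,b) * D b b
        + (if _h : 0 < (j:ℕ) then
            Y (i,a) (⟨(j:ℕ)-1, lt_of_le_of_lt (Nat.sub_le _ _) j.isLt⟩, b) else 0)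
      = D a a * Y (i,a) (j,b)
        + (if h : (i:ℕ)+1 < d then Y (⟨(i:ℕ)+1, h⟩, a) (j,b) else 0) := by
    intro i j a b
    have h := congrFun (congrFun hcomm (i,a)) (j,b)
    simp only [Matrix.mul_apply, Matrix.add_apply, Matrix.kroneckerMap_apply, superdiag,
      Matrix.one_apply, Fintype.sum_prod_type] at h
    have hsumD : ∀ x : Fin d, (∑ y, Y (i,a) (x,y) * D y b) = Y (i,a) (x,b) * D b b := by
      intro x
      rw [Finset.sum_eq_single b]
      · intro y _ hy; rw [hdiag hy, mul_zero]
      · simp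
    have hsumD2 : ∀ x : Fin d, (∑ y, D a y * Y (x,y) (j,b)) = D a a * Y (x,a) (j,b) := by
      intro x
      rw [Finset.sum_eq_single a]
      · intro y _ hy; rw [hdiag (fun hc => hy hc.symm), zero_mul]
      · simp
    simp only [mul_add, add_mul, ite_mul, mul_ite, one_mul, mul_one, zero_mul, mul_zero,
      Finset.sum_add_distrib, Finset.sum_ite_irrel, Finset.sum_const_zero,
      Finset.sum_ite_eq, Finset.sum_ite_eq', Finset.mem_univ, if_true, hsumD, hsumD2] at h
    rw [sum_pred_eq j (fun x => Y (i,a) (x,b)), sum_succ_eq i (fun x => Y (x,a) (j,b))] at h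
    exact h
  -- (A) blocks are diagonal: entries with `a ≠ b` vanish
  have hA : ∀ (n : ℕ) (i j : Fin d) (a b : Fin k),
      (d - 1 - (i:ℕ)) * d + (j:ℕ) = n → a ≠ b → Y (i,a) (j,b) = 0 := by
    intro n
    induction n using Nat.strong_induction_on with
    | _ n ih =>
      intro i j a b hn hab
      have hc : D b b - D a a ≠ 0 := sub_ne_zero.mpr (hdist b a (Ne.symm hab))
      have hk := key i j a b
      have h1 : (if _h : 0 < (j:ℕ) then
          Y (i,a) (⟨(j:ℕ)-1, lt_of_le_of_lt (Nat.sub_le _ _) j.isLt⟩, b) else 0) = 0 := by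
        split_ifs with h
        · refine ih _ ?_ i _ a b rfl hab
          rw [← hn]
          exact Nat.add_lt_add_left (by simp; omega) _
        · rfl
      have h2 : (if h : (i:ℕ)+1 < d then Y (⟨(i:ℕ)+1, h⟩, a) (j,b) else 0) = 0 := by
        split_ifs with h
        · refine ih _ ?_ _ j a b rfl hab
          rw [← hn]
          apply Nat.add_lt_add_right
          exact Nat.mul_lt_mul_of_lt_of_le (by simp; omega) le_rfl (by omega)
        · rfl
      rw [h1, h2, add_zero, add_zero] at hk
      have h0 : Y (i,a) (j,b) * (D b b - D a a) = 0 := by linear_combination hk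
      rcases mul_eq_zero.mp h0 with h | h
      · exact h
      · exact absurd h hc
  have hA' : ∀ (i j : Fin d) (a b : Fin k), a ≠ b → Y (i,a) (j,b) = 0 :=
    fun i j a b hab => hA _ i j a b rfl hab
  -- (B) the shift relation on the diagonal blocks
  have hB' : ∀ (i j : Fin d) (a : Fin k), 0 < (i:ℕ) →
      Y (i,a) (j,a) = (if _h : 0 < (j:ℕ) then
        Y (⟨(i:ℕ)-1, lt_of_le_of_lt (Nat.sub_le _ _) i.isLt⟩, a)
          (⟨(j:ℕ)-1, lt_of_le_of_lt (Nat.sub_le _ _) j.isLt⟩, a) else 0) := by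
    intro i j a hi
    have hk := key ⟨(i:ℕ)-1, lt_of_le_of_lt (Nat.sub_le _ _) i.isLt⟩ j a a
    rw [dif_pos (show ((i:ℕ)-1)+1 < d by omega)] at hk
    have he : (⟨((i:ℕ)-1)+1, show ((i:ℕ)-1)+1 < d by omega⟩ : Fin d) = i :=
      Fin.ext (by simp; omega)
    rw [he] at hk
    linear_combination -hk
  -- (C) lower triangular blocks vanish
  have hC : ∀ (m : ℕ) (i j : Fin d) (a : Fin k),
      (j:ℕ) = m → (j:ℕ) < (i:ℕ) → Y (i,a) (j,a) = 0 := by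
    intro m
    induction m with
    | zero =>
      intro i j a hj hij
      have h := hB' i j a (by omega)
      rwa [dif_neg (by omega)] at h
    | succ m ih =>
      intro i j a hj hij
      have h := hB' i j a (by omega)
      rw [dif_pos (by omega)] at h
      rw [h]
      exact ih _ _ _ (by simp; omega) (by simp; omega)
  -- (D) upper triangular blocks depend only on the difference
  have hD : ∀ (m : ℕ) (i j : Fin d) (a : Fin k), (i:ℕ) = m → (i:ℕ) ≤ (j:ℕ) →
      Y (i,a) (j,a)
        = Y (⟨0, by omega⟩, a) (⟨(j:ℕ)-(i:ℕ), lt_of_le_of_lt (Nat.sub_le _ _) j.isLt⟩, a) := by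
    intro m
    induction m with
    | zero =>
      intro i j a hi hij
      congr 1
      · exact Prod.ext (Fin.ext (by simp; omega)).symm rfl
      · exact Prod.ext (Fin.ext (by simp; omega)).symm rfl
    | succ m ih =>
      intro i j a hi hij
      have h := hB' i j a (by omega)
      rw [dif_pos (by omega)] at h
      rw [h, ih _ _ _ (by simp; omega) (by simp; omega)]
      congr 1
      exact Prod.ext (Fin.ext (by simp; omega)) rfl
  refine ⟨fun t => Matrix.diagonal (fun a => Y (⟨0, by omega⟩, a) (t, a)),
    fun t => Matrix.isDiag_diagonal _, ?_⟩
  funext p q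
  obtain ⟨i, a⟩ := p
  obtain ⟨j, b⟩ := q
  unfold butt
  dsimp only
  by_cases hab : a = b
  · subst hab
    split_ifs with hle
    · rw [Matrix.diagonal_apply_eq]
      exact hD (i:ℕ) i j a rfl hle
    · exact hC (j:ℕ) i j a rfl (by omega)
  · split_ifs with hle
    · rw [Matrix.diagonal_apply_ne _ hab]
      exact hA' i j a b hab
    · exact hA' i j a b hab
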